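/- For every natural number k ≥ 1 and every real ε ∈ (0, 1), there exists a real polynomial p with natural degree at most ⌈√(2k·ln(2/ε))⌉ such that sup_{x ∈ [−1,1]} |x^k − p(x)| ≤ ε, and moreover p has the same parity as k, i.e., p(−x) = (−1)^k · p(x) for all real x. -/

import Mathlib

open Polynomial Finset

private lemma natDegree_T_le_aux : ∀ n : ℕ, (Chebyshev.T ℝ (n : ℤ)).natDegree ≤ n
  | 0 => by simp
  | 1 => by simp
  | (n+2) => by
    have h1 := natDegree_T_le_aux (n+1)
    have h2 := natDegree_T_le_aux n
    rw [show ((n+2 : ℕ) : ℤ) = (n : ℤ) + 2 by push_cast; ring, Chebyshev.T_add_two]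
    refine le_trans (natDegree_sub_le _ _) (max_le ?_ (h2.trans (by omega)))
    refine le_trans (natDegree_mul_le) ?_
    have : (2 * X : ℝ[X]).natDegree ≤ 1 :=
      le_trans natDegree_mul_le (by simp)
    push_cast at h1
    omega

private lemma natDegree_T_le' (n : ℤ) : (Chebyshev.T ℝ n).natDegree ≤ n.natAbs := by
  rw [← Chebyshev.T_natAbs]
  exact natDegree_T_le_aux n.natAbs

private lemma T_eval_neg : ∀ (n : ℤ) (x : ℝ),
    (Chebyshev.T ℝ n).eval (-x) = (-1 : ℝ) ^ n * (Chebyshev.T ℝ n).eval x := by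
  intro n
  induction n using Polynomial.Chebyshev.induct with
  | zero => simp
  | one => intro x; simp
  | add_two n ih1 ih2 =>
    intro x
    have e1 := ih1 x
    have e2 := ih2 x
    rw [show ((n : ℤ) + 2) = (n + 1) + 1 by ring, Chebyshev.T_add_one]
    have ha : (-1 : ℝ) ^ ((n : ℤ) + 1) = -(-1 : ℝ) ^ (n : ℤ) := by
      rw [zpow_add₀ (by norm_num : (-1:ℝ) ≠ 0)]; simp
    have hb : (-1 : ℝ) ^ ((n : ℤ) + 1 + 1) = (-1 : ℝ) ^ (n : ℤ) := by
      rw [zpow_add₀ (by norm_num : (-1:ℝ) ≠ 0), ha]; simp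
    simp only [eval_sub, eval_mul, eval_ofNat, eval_X, show (n:ℤ)+1-1 = (n:ℤ) by ring,
      e1, e2, ha, hb]
    ring
  | neg_add_one n ih1 ih2 =>
    intro x
    have e1 := ih1 x
    have e2 := ih2 x
    rw [show (-(n : ℤ) - 1) = (-(n:ℤ)) - 1 by ring, Chebyshev.T_sub_one]
    have ha : (-1 : ℝ) ^ (-(n : ℤ) + 1) = -(-1 : ℝ) ^ (-(n : ℤ)) := by
      rw [zpow_add₀ (by norm_num : (-1:ℝ) ≠ 0)]; simp
    have hb : (-1 : ℝ) ^ (-(n : ℤ) - 1) = -(-1 : ℝ) ^ (-(n : ℤ)) := by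
      rw [zpow_sub₀ (by norm_num : (-1:ℝ) ≠ 0)]; simp [div_neg]
    simp only [eval_sub, eval_mul, eval_ofNat, eval_X, e1, e2, ha, hb]
    ring

private lemma complex_cos_pow (k : ℕ) (θ : ℂ) :
    (Complex.cos θ) ^ k =
      (2⁻¹ : ℂ) ^ k * ∑ j ∈ range (k+1), (k.choose j : ℂ) *
        Complex.cos ((((k : ℤ) - 2 * j : ℤ) : ℂ) * θ) := by
  set z := Complex.exp (θ * Complex.I) with hz
  have hz0 : z ≠ 0 := Complex.exp_ne_zero _
  have hzm : ∀ m : ℤ, z ^ m = Complex.exp ((m : ℂ) * θ * Complex.I) := fun m => by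
    rw [hz, ← Complex.exp_int_mul, mul_assoc]
  have hcosm : ∀ m : ℤ, Complex.cos ((m : ℂ) * θ) = (z ^ m + z ^ (-m)) / 2 := fun m => by
    rw [hzm, hzm, Complex.cos,
      show ((-m : ℤ) : ℂ) * θ * Complex.I = -((m : ℂ) * θ * Complex.I) by push_cast; ring]
    ring_nf
  have hcos : Complex.cos θ = (z + z⁻¹) / 2 := by
    have := hcosm 1
    simpa [zpow_neg] using this
  have key : ∑ j ∈ range (k+1), (k.choose j : ℂ) * z ^ ((k : ℤ) - 2 * j)
      = (z + z⁻¹) ^ k := by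
    rw [add_pow, ← Finset.sum_range_reflect]
    refine Finset.sum_congr rfl fun j hj => ?_
    have hjk : j ≤ k := Nat.lt_succ_iff.mp (Finset.mem_range.mp hj)
    simp only [Nat.add_sub_cancel]
    rw [Nat.choose_symm hjk,
      show (k : ℤ) - 2 * ((k - j : ℕ) : ℤ) = (j : ℤ) - ((k - j : ℕ) : ℤ) by omega,
      zpow_sub₀ hz0, zpow_natCast, zpow_natCast, div_eq_mul_inv, ← inv_pow]
    ring
  have key2 : ∑ j ∈ range (k+1), (k.choose j : ℂ) * z ^ (-((k : ℤ) - 2 * j))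
      = (z + z⁻¹) ^ k := by
    rw [← key, ← Finset.sum_range_reflect]
    refine Finset.sum_congr rfl fun j hj => ?_
    have hjk : j ≤ k := Nat.lt_succ_iff.mp (Finset.mem_range.mp hj)
    simp only [Nat.add_sub_cancel]
    rw [Nat.choose_symm hjk,
      show ((k - j : ℕ) : ℤ) = (k : ℤ) - j by omega,
      show (k : ℤ) - 2 * ((k : ℤ) - j) = -((k : ℤ) - 2 * j) by ring, neg_neg]
  have hsum : ∑ j ∈ range (k+1), (k.choose j : ℂ) *
      Complex.cos ((((k : ℤ) - 2 * j : ℤ) : ℂ) * θ) = (z + z⁻¹) ^ k := by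
    have hterm : ∀ j ∈ range (k+1), (k.choose j : ℂ) *
        Complex.cos ((((k : ℤ) - 2 * j : ℤ) : ℂ) * θ)
        = ((k.choose j : ℂ) * z ^ ((k : ℤ) - 2 * j)
           + (k.choose j : ℂ) * z ^ (-((k : ℤ) - 2 * j))) / 2 := fun j _ => by
      rw [hcosm ((k : ℤ) - 2 * j)]
      ring
    rw [Finset.sum_congr rfl hterm, ← Finset.sum_div, Finset.sum_add_distrib, key, key2]
    ring
  rw [hcos, hsum, div_pow]
  rw [div_eq_mul_inv, inv_pow]; exact mul_comm _ _

private lemma real_cos_pow (k : ℕ) (θ : ℝ) :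
    (Real.cos θ) ^ k =
      (2⁻¹ : ℝ) ^ k * ∑ j ∈ range (k+1), (k.choose j : ℝ) *
        Real.cos ((((k : ℤ) - 2 * j : ℤ) : ℝ) * θ) := by
  have h := complex_cos_pow k (θ : ℂ)
  apply Complex.ofReal_injective
  push_cast at h ⊢
  exact h

private lemma one_sided (k d : ℕ) (hk : 1 ≤ k) :
    ∑ j ∈ range (k+1), (if (d : ℝ) < (k : ℝ) - 2 * j then (k.choose j : ℝ) else 0)
      ≤ 2 ^ k * Real.exp (-(d : ℝ)^2 / (2 * k)) := by
  set t : ℝ := d / k with ht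
  have hk0 : (0 : ℝ) < k := by positivity
  have ht0 : 0 ≤ t := by positivity
  have step1 : ∀ j ∈ range (k+1),
      (if (d : ℝ) < (k : ℝ) - 2 * j then (k.choose j : ℝ) else 0)
        ≤ (k.choose j : ℝ) * Real.exp (t * ((k : ℝ) - 2 * j)) * Real.exp (-(t * d)) := by
    intro j hj
    split_ifs with h
    · have h1 : 1 ≤ Real.exp (t * ((k : ℝ) - 2 * j) - t * d) := by
        rw [Real.one_le_exp_iff]
        nlinarith
      calc (k.choose j : ℝ) = (k.choose j : ℝ) * 1 := by ring
        _ ≤ (k.choose j : ℝ) * Real.exp (t * ((k : ℝ) - 2 * j) - t * d) :=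
            mul_le_mul_of_nonneg_left h1 (by positivity)
        _ = _ := by rw [Real.exp_sub]; rw [Real.exp_neg]; ring_nf
    · positivity
  have step2 : ∑ j ∈ range (k+1), (k.choose j : ℝ) * Real.exp (t * ((k : ℝ) - 2 * j))
      = (Real.exp (-t) + Real.exp t) ^ k := by
    rw [add_pow]
    refine Finset.sum_congr rfl fun j hj => ?_
    have hjk : j ≤ k := Nat.lt_succ_iff.mp (Finset.mem_range.mp hj)
    rw [← Real.exp_nat_mul, ← Real.exp_nat_mul, ← Real.exp_add]
    have : ((k - j : ℕ) : ℝ) = (k : ℝ) - j := by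
      push_cast [Nat.cast_sub hjk]; ring
    rw [this, mul_comm]
    congr 1
    ring
  have step3 : (Real.exp (-t) + Real.exp t) ^ k ≤ 2 ^ k * Real.exp (k * t ^ 2 / 2) := by
    have h1 : Real.exp (-t) + Real.exp t = 2 * Real.cosh t := by
      rw [Real.cosh_eq]; ring
    rw [h1, mul_pow]
    refine mul_le_mul_of_nonneg_left ?_ (by positivity)
    calc Real.cosh t ^ k ≤ (Real.exp (t^2/2)) ^ k :=
          pow_le_pow_left₀ (Real.cosh_pos t).le (Real.cosh_le_exp_half_sq t) k
      _ = Real.exp (k * (t^2/2)) := (Real.exp_nat_mul _ k).symm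
      _ = Real.exp (k * t^2 / 2) := by ring_nf
  calc ∑ j ∈ range (k+1), (if (d : ℝ) < (k : ℝ) - 2 * j then (k.choose j : ℝ) else 0)
      ≤ ∑ j ∈ range (k+1), (k.choose j : ℝ) * Real.exp (t * ((k : ℝ) - 2 * j))
          * Real.exp (-(t * d)) := Finset.sum_le_sum step1
    _ = (∑ j ∈ range (k+1), (k.choose j : ℝ) * Real.exp (t * ((k : ℝ) - 2 * j)))
          * Real.exp (-(t * d)) := by rw [← Finset.sum_mul]
    _ = (Real.exp (-t) + Real.exp t) ^ k * Real.exp (-(t * d)) := by rw [step2]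
    _ ≤ 2 ^ k * Real.exp (k * t ^ 2 / 2) * Real.exp (-(t * d)) :=
        mul_le_mul_of_nonneg_right step3 (Real.exp_nonneg _)
    _ = 2 ^ k * Real.exp (k * t ^ 2 / 2 - t * d) := by
        rw [mul_assoc, ← Real.exp_add]; ring_nf
    _ = 2 ^ k * Real.exp (-(d : ℝ)^2 / (2 * k)) := by
        congr 2
        rw [ht]
        field_simp
        ring

private lemma tail_bound (k d : ℕ) (hk : 1 ≤ k) :
    ∑ j ∈ (range (k+1)).filter (fun j : ℕ => ¬ ((k : ℤ) - 2 * j).natAbs ≤ d),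
      (k.choose j : ℝ) ≤ 2 * 2 ^ k * Real.exp (-(d : ℝ)^2 / (2 * k)) := by
  have ha := one_sided k d hk
  have hb : ∑ j ∈ range (k+1), (if (d : ℝ) < 2 * j - (k : ℝ) then (k.choose j : ℝ) else 0)
      ≤ 2 ^ k * Real.exp (-(d : ℝ)^2 / (2 * k)) := by
    refine le_trans (le_of_eq ?_) ha
    rw [← Finset.sum_range_reflect
      (fun j => if (d : ℝ) < (k : ℝ) - 2 * j then (k.choose j : ℝ) else 0) (k+1)]
    refine Finset.sum_congr rfl fun j hj => ?_
    have hjk : j ≤ k := Nat.lt_succ_iff.mp (Finset.mem_range.mp hj)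
    simp only [Nat.add_sub_cancel]
    have h1 : ((k - j : ℕ) : ℝ) = (k : ℝ) - j := by
      push_cast [Nat.cast_sub hjk]; ring
    rw [h1, Nat.choose_symm hjk, show (k : ℝ) - 2 * ((k : ℝ) - j) = 2 * j - k by ring]
  calc ∑ j ∈ (range (k+1)).filter (fun j : ℕ => ¬ ((k : ℤ) - 2 * j).natAbs ≤ d),
        (k.choose j : ℝ)
      = ∑ j ∈ range (k+1),
          (if ¬ ((k : ℤ) - 2 * j).natAbs ≤ d then (k.choose j : ℝ) else 0) :=
        Finset.sum_filter _ _
    _ ≤ ∑ j ∈ range (k+1),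
          ((if (d : ℝ) < (k : ℝ) - 2 * j then (k.choose j : ℝ) else 0)
            + (if (d : ℝ) < 2 * j - (k : ℝ) then (k.choose j : ℝ) else 0)) := by
        refine Finset.sum_le_sum fun j hj => ?_
        by_cases h : ((k : ℤ) - 2 * j).natAbs ≤ d
        · simp only [h, not_true_eq_false, if_false]
          positivity
        · simp only [h, not_false_eq_true, if_true]
          have h2 : (d : ℤ) < |(k : ℤ) - 2 * j| := by
            rw [Int.abs_eq_natAbs]
            exact_mod_cast Nat.lt_of_not_le h
          rcases lt_abs.mp h2 with h3 | h3
          · have h4 : (d : ℝ) < (k : ℝ) - 2 * j := by exact_mod_cast h3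
            rw [if_pos h4]
            have : (0:ℝ) ≤ (if (d : ℝ) < 2 * j - (k : ℝ) then (k.choose j : ℝ) else 0) := by
              positivity
            linarith
          · have h4 : (d : ℝ) < 2 * j - (k : ℝ) := by
              have : (d : ℤ) < 2 * j - k := by omega
              exact_mod_cast this
            rw [if_pos h4]
            have : (0:ℝ) ≤ (if (d : ℝ) < (k : ℝ) - 2 * j then (k.choose j : ℝ) else 0) := by
              positivity
            linarith
    _ = (∑ j ∈ range (k+1), (if (d : ℝ) < (k : ℝ) - 2 * j then (k.choose j : ℝ) else 0))
        + ∑ j ∈ range (k+1), (if (d : ℝ) < 2 * j - (k : ℝ) then (k.choose j : ℝ) else 0) :=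
        Finset.sum_add_distrib
    _ ≤ 2 ^ k * Real.exp (-(d : ℝ)^2 / (2 * k))
        + 2 ^ k * Real.exp (-(d : ℝ)^2 / (2 * k)) := add_le_add ha hb
    _ = 2 * 2 ^ k * Real.exp (-(d : ℝ)^2 / (2 * k)) := by ring

/-- For every `k ≥ 1` and `ε ∈ (0,1)` there is a real polynomial of degree at most
`⌈√(2k·ln(2/ε))⌉` that uniformly `ε`-approximates `x ^ k` on `[-1, 1]` and has the same
parity as `k`. -/
theorem exists_polynomial_approx_pow (k : ℕ) (hk : 1 ≤ k) (ε : ℝ) (hε0 : 0 < ε) (hε1 : ε < 1) :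
    ∃ p : ℝ[X],
      p.natDegree ≤ ⌈Real.sqrt (2 * k * Real.log (2 / ε))⌉₊ ∧
      (∀ x ∈ Set.Icc (-1 : ℝ) 1, |x ^ k - p.eval x| ≤ ε) ∧
      (∀ x : ℝ, p.eval (-x) = (-1 : ℝ) ^ k * p.eval x) := by
  set d : ℕ := ⌈Real.sqrt (2 * k * Real.log (2 / ε))⌉₊ with hd
  set S : Finset ℕ := (range (k+1)).filter (fun j : ℕ => ((k : ℤ) - 2 * j).natAbs ≤ d)
    with hS
  refine ⟨∑ j ∈ S, C ((k.choose j : ℝ) * 2⁻¹ ^ k) * Chebyshev.T ℝ ((k : ℤ) - 2 * j),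
    ?_, ?_, ?_⟩
  · refine natDegree_sum_le_of_forall_le _ _ fun j hj => ?_
    refine le_trans (natDegree_C_mul_le _ _) (le_trans (natDegree_T_le' _) ?_)
    exact (Finset.mem_filter.mp hj).2
  · intro x hx
    obtain ⟨hx1, hx2⟩ := hx
    set θ := Real.arccos x with hθ
    have hcx : Real.cos θ = x := Real.cos_arccos hx1 hx2
    have heval : (∑ j ∈ S, C ((k.choose j : ℝ) * 2⁻¹ ^ k)
          * Chebyshev.T ℝ ((k : ℤ) - 2 * j)).eval x
        = ∑ j ∈ S, (k.choose j : ℝ) * 2⁻¹ ^ k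
          * Real.cos ((((k : ℤ) - 2 * j : ℤ) : ℝ) * θ) := by
      rw [eval_finset_sum]
      refine Finset.sum_congr rfl fun j hj => ?_
      rw [eval_mul, eval_C, ← hcx, Polynomial.Chebyshev.T_real_cos]
    have hxk : x ^ k = 2⁻¹ ^ k * ∑ j ∈ range (k+1), (k.choose j : ℝ) *
        Real.cos ((((k : ℤ) - 2 * j : ℤ) : ℝ) * θ) := by
      rw [← hcx]; exact real_cos_pow k θ
    have hsplit : ∑ j ∈ range (k+1), (k.choose j : ℝ) *
          Real.cos ((((k : ℤ) - 2 * j : ℤ) : ℝ) * θ)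
        = (∑ j ∈ S, (k.choose j : ℝ) * Real.cos ((((k : ℤ) - 2 * j : ℤ) : ℝ) * θ))
          + ∑ j ∈ (range (k+1)).filter (fun j : ℕ => ¬ ((k : ℤ) - 2 * j).natAbs ≤ d),
              (k.choose j : ℝ) * Real.cos ((((k : ℤ) - 2 * j : ℤ) : ℝ) * θ) := by
      rw [hS]
      exact (Finset.sum_filter_add_sum_filter_not _ _ _).symm
    have hScos : ∑ j ∈ S, (k.choose j : ℝ) * 2⁻¹ ^ k
          * Real.cos ((((k : ℤ) - 2 * j : ℤ) : ℝ) * θ)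
        = 2⁻¹ ^ k * ∑ j ∈ S, (k.choose j : ℝ)
          * Real.cos ((((k : ℤ) - 2 * j : ℤ) : ℝ) * θ) := by
      rw [Finset.mul_sum]
      exact Finset.sum_congr rfl fun j _ => by ring
    have hdiff : x ^ k - (∑ j ∈ S, C ((k.choose j : ℝ) * 2⁻¹ ^ k)
          * Chebyshev.T ℝ ((k : ℤ) - 2 * j)).eval x
        = 2⁻¹ ^ k * ∑ j ∈ (range (k+1)).filter
            (fun j : ℕ => ¬ ((k : ℤ) - 2 * j).natAbs ≤ d),
            (k.choose j : ℝ) * Real.cos ((((k : ℤ) - 2 * j : ℤ) : ℝ) * θ) := by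
      rw [heval, hxk, hsplit, hScos, mul_add]
      ring
    rw [hdiff]
    have habs : |∑ j ∈ (range (k+1)).filter
          (fun j : ℕ => ¬ ((k : ℤ) - 2 * j).natAbs ≤ d),
          (k.choose j : ℝ) * Real.cos ((((k : ℤ) - 2 * j : ℤ) : ℝ) * θ)|
        ≤ ∑ j ∈ (range (k+1)).filter (fun j : ℕ => ¬ ((k : ℤ) - 2 * j).natAbs ≤ d),
          (k.choose j : ℝ) := by
      refine le_trans (Finset.abs_sum_le_sum_abs _ _) (Finset.sum_le_sum fun j hj => ?_)
      rw [abs_mul, abs_of_nonneg (by positivity : (0:ℝ) ≤ (k.choose j : ℝ))]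
      calc (k.choose j : ℝ) * |Real.cos ((((k : ℤ) - 2 * j : ℤ) : ℝ) * θ)|
          ≤ (k.choose j : ℝ) * 1 :=
            mul_le_mul_of_nonneg_left (Real.abs_cos_le_one _) (by positivity)
        _ = _ := mul_one _
    have hlog : 0 < Real.log (2 / ε) := by
      apply Real.log_pos
      rw [lt_div_iff₀ hε0]
      linarith
    have hd2 : 2 * k * Real.log (2 / ε) ≤ (d : ℝ) ^ 2 := by
      have h0 : Real.sqrt (2 * k * Real.log (2 / ε)) ≤ (d : ℝ) := Nat.le_ceil _
      have h1 : (0:ℝ) ≤ 2 * k * Real.log (2 / ε) := by positivity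
      calc 2 * k * Real.log (2 / ε)
          = Real.sqrt (2 * k * Real.log (2 / ε)) ^ 2 := (Real.sq_sqrt h1).symm
        _ ≤ (d : ℝ) ^ 2 := pow_le_pow_left₀ (Real.sqrt_nonneg _) h0 2
    have hexp : Real.exp (-(d : ℝ)^2 / (2 * k)) ≤ ε / 2 := by
      have hk0 : (0:ℝ) < k := by positivity
      have h2 : -(d : ℝ)^2 / (2 * k) ≤ -Real.log (2 / ε) := by
        rw [neg_div, neg_le_neg_iff, le_div_iff₀ (by positivity)]
        linarith
      calc Real.exp (-(d : ℝ)^2 / (2 * k)) ≤ Real.exp (-Real.log (2 / ε)) :=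
            Real.exp_le_exp.mpr h2
        _ = ε / 2 := by
            rw [Real.exp_neg, Real.exp_log (by positivity), inv_div]
    calc |2⁻¹ ^ k * ∑ j ∈ (range (k+1)).filter
            (fun j : ℕ => ¬ ((k : ℤ) - 2 * j).natAbs ≤ d),
            (k.choose j : ℝ) * Real.cos ((((k : ℤ) - 2 * j : ℤ) : ℝ) * θ)|
        = 2⁻¹ ^ k * |∑ j ∈ (range (k+1)).filter
            (fun j : ℕ => ¬ ((k : ℤ) - 2 * j).natAbs ≤ d),
            (k.choose j : ℝ) * Real.cos ((((k : ℤ) - 2 * j : ℤ) : ℝ) * θ)| := by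
          rw [abs_mul, abs_of_nonneg (by positivity : (0:ℝ) ≤ (2⁻¹:ℝ) ^ k)]
      _ ≤ 2⁻¹ ^ k * (2 * 2 ^ k * Real.exp (-(d : ℝ)^2 / (2 * k))) :=
          mul_le_mul_of_nonneg_left (le_trans habs (tail_bound k d hk)) (by positivity)
      _ = 2 * Real.exp (-(d : ℝ)^2 / (2 * k)) := by
          rw [show (2⁻¹:ℝ) ^ k * (2 * 2 ^ k * Real.exp (-(d : ℝ)^2 / (2 * k)))
            = (2⁻¹ * 2 : ℝ) ^ k * (2 * Real.exp (-(d : ℝ)^2 / (2 * k))) by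
              rw [mul_pow]; ring]
          norm_num
      _ ≤ 2 * (ε / 2) := by linarith
      _ = ε := by ring
  · intro x
    rw [eval_finset_sum, eval_finset_sum, Finset.mul_sum]
    refine Finset.sum_congr rfl fun j hj => ?_
    have hpar : (-1 : ℝ) ^ ((k : ℤ) - 2 * j) = (-1 : ℝ) ^ k := by
      rw [zpow_sub₀ (by norm_num : (-1:ℝ) ≠ 0), show (2 * j : ℤ) = (2:ℤ) * j by norm_num,
        zpow_mul, show ((-1:ℝ) ^ (2:ℤ)) = 1 by norm_num, one_zpow, div_one, zpow_natCast]
    rw [eval_mul, eval_mul, eval_C, eval_C, T_eval_neg, hpar]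
    ring
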